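/- Let X and Y be finite discrete random variables with joint probabilities p_{x,y}. Then 2^{-H(Y|X)} ≤ ∑_x max_y p_{x,y}, where H(Y|X) = ∑_x p_x · H(Y|X=x) is the conditional Shannon entropy (base 2). -/

import Mathlib

open Finset Real

lemma convexOn_two_rpow : ConvexOn ℝ Set.univ (fun t : ℝ => (2:ℝ) ^ t) := by
  have h := convexOn_exp.comp_affineMap (AffineMap.lineMap (0:ℝ) (Real.log 2))
  simp only [AffineMap.coe_lineMap, Set.preimage_univ, Function.comp] at h
  refine ConvexOn.congr h ?_
  intro t _
  show _ = (2:ℝ) ^ t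
  rw [Real.rpow_def_of_pos two_pos]
  simp [AffineMap.lineMap_apply, mul_comm, smul_eq_mul]


/-- For finite discrete random variables `X` and `Y` with joint pmf `p`,
`2 ^ (-H(Y|X)) ≤ ∑ x, max_y p x y`, where
`H(Y|X) = -∑ x, ∑ y, p x y * log₂ (p x y / (∑ y', p x y'))`. -/
theorem cond_score_le_bayes_accuracy {α β : Type*} [Fintype α] [Fintype β] [Nonempty β]
    (p : α → β → ℝ) (hp : ∀ x y, 0 ≤ p x y) (hsum : ∑ x, ∑ y, p x y = 1) :
    (2 : ℝ) ^ (-(-∑ x, ∑ y, p x y * Real.logb 2 (p x y / ∑ y', p x y'))) ≤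
      ∑ x, Finset.univ.sup' Finset.univ_nonempty (fun y => p x y) := by
  rw [neg_neg]
  set P : α → ℝ := fun x => ∑ y, p x y with hP
  set M : α → ℝ := fun x => Finset.univ.sup' Finset.univ_nonempty (fun y => p x y) with hM
  have hP0 : ∀ x, 0 ≤ P x := fun x => Finset.sum_nonneg fun y _ => hp x y
  have hM0 : ∀ x, 0 ≤ M x := by
    intro x
    obtain ⟨y⟩ := ‹Nonempty β›
    exact le_trans (hp x y) (Finset.le_sup' _ (Finset.mem_univ y))
  -- if P x = 0 then all p x y = 0
  have hzero : ∀ x, P x = 0 → ∀ y, p x y = 0 := by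
    intro x h y
    have := (Finset.sum_eq_zero_iff_of_nonneg (fun y _ => hp x y)).mp h
    exact this y (Finset.mem_univ y)
  set t : α → ℝ := fun x => if P x = 0 then 0 else (∑ y, p x y * Real.logb 2 (p x y / P x)) / P x with ht
  have hkey : ∀ x, P x * t x = ∑ y, p x y * Real.logb 2 (p x y / P x) := by
    intro x
    by_cases h : P x = 0
    · rw [ht]; simp only [h, if_true, if_pos rfl, zero_mul]
      rw [Finset.sum_eq_zero fun y _ => by rw [hzero x h y]; ring]
    · rw [ht]; simp only [h, if_false]; field_simp
  have hsumP : ∑ x, P x = 1 := hsum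
  -- Jensen
  have jensen : (2:ℝ) ^ (∑ x, P x * t x) ≤ ∑ x, P x * (2:ℝ) ^ (t x) := by
    have := convexOn_two_rpow.map_sum_le (t := Finset.univ) (w := P) (p := t)
      (fun i _ => hP0 i) hsumP (fun i _ => Set.mem_univ _)
    simpa [smul_eq_mul] using this
  have step2 : ∀ x, P x * (2:ℝ) ^ (t x) ≤ M x := by
    intro x
    by_cases h : P x = 0
    · simp [h, hM0 x]
    · have hPpos : 0 < P x := lt_of_le_of_ne (hP0 x) (Ne.symm h)
      obtain ⟨y₀, hy₀⟩ : ∃ y, 0 < p x y := by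
        by_contra hc
        push_neg at hc
        have : P x ≤ 0 := Finset.sum_nonpos fun y _ => hc y
        linarith
      have hMpos : 0 < M x := lt_of_lt_of_le hy₀ (Finset.le_sup' _ (Finset.mem_univ y₀))
      have htle : t x ≤ Real.logb 2 (M x / P x) := by
        rw [ht]; simp only [h, if_false]
        rw [div_le_iff₀ hPpos]
        calc ∑ y, p x y * Real.logb 2 (p x y / P x)
            ≤ ∑ y, p x y * Real.logb 2 (M x / P x) := by
              apply Finset.sum_le_sum
              intro y _
              rcases eq_or_lt_of_le (hp x y) with hy | hy
              · simp [← hy]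
              · apply mul_le_mul_of_nonneg_left _ (hp x y)
                exact Real.logb_le_logb_of_le one_lt_two (div_pos hy hPpos)
                  (by gcongr; exact Finset.le_sup' _ (Finset.mem_univ y))
          _ = P x * Real.logb 2 (M x / P x) := by rw [← Finset.sum_mul]
          _ = Real.logb 2 (M x / P x) * P x := mul_comm _ _
      have h2 : (2:ℝ) ^ (t x) ≤ M x / P x := by
        calc (2:ℝ) ^ (t x) ≤ (2:ℝ) ^ (Real.logb 2 (M x / P x)) :=
              Real.rpow_le_rpow_of_exponent_le one_le_two htle
          _ = M x / P x := Real.rpow_logb two_pos (by norm_num) (div_pos hMpos hPpos)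
      calc P x * (2:ℝ) ^ (t x) ≤ P x * (M x / P x) :=
            mul_le_mul_of_nonneg_left h2 (hP0 x)
        _ = M x := by field_simp
  calc (2:ℝ) ^ (∑ x, ∑ y, p x y * Real.logb 2 (p x y / P x))
      = (2:ℝ) ^ (∑ x, P x * t x) := by rw [Finset.sum_congr rfl fun x _ => (hkey x).symm]
    _ ≤ ∑ x, P x * (2:ℝ) ^ (t x) := jensen
    _ ≤ ∑ x, M x := Finset.sum_le_sum fun x _ => step2 x
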